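/- Let d ≥ 3 be an integer. There is no integer a with 0 ≤ a ≤ d such that √(1 + 4d) = (a − 1) + √(a² + 4d − 4a). -/
import Mathlib


/-- For `d ≥ 3` there is no integer `0 ≤ a ≤ d` with
`√(1+4d) = (a-1) + √(a²+4d-4a)`. -/
theorem stmt_5 (d : ℤ) (hd : 3 ≤ d) :
    ¬ ∃ a : ℤ, 0 ≤ a ∧ a ≤ d ∧
      Real.sqrt (1 + 4 * (d : ℝ)) =
        ((a : ℝ) - 1) + Real.sqrt ((a : ℝ) ^ 2 + 4 * (d : ℝ) - 4 * (a : ℝ)) := by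
  rintro ⟨a, h0, had, h⟩
  have hd' : (3:ℝ) ≤ (d:ℝ) := by exact_mod_cast hd
  have ha : (0:ℝ) ≤ (a:ℝ) ^ 2 + 4 * (d:ℝ) - 4 * (a:ℝ) := by
    nlinarith [sq_nonneg ((a:ℝ) - 2)]
  set s := Real.sqrt ((a:ℝ) ^ 2 + 4 * (d:ℝ) - 4 * (a:ℝ)) with hs
  have hs0 : 0 ≤ s := Real.sqrt_nonneg _
  have hs2 : s ^ 2 = (a:ℝ) ^ 2 + 4 * (d:ℝ) - 4 * (a:ℝ) := Real.sq_sqrt ha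
  have h1 : (1:ℝ) + 4 * (d:ℝ) = (((a:ℝ) - 1) + s) ^ 2 := by
    have h2 := Real.sq_sqrt (by linarith : (0:ℝ) ≤ 1 + 4 * (d:ℝ))
    rw [h] at h2
    linarith [h2]
  have key : ((a:ℝ) - 1) * s = (a:ℝ) * (3 - (a:ℝ)) := by nlinarith [h1, hs2]
  rcases lt_or_ge a 4 with h4 | h4
  · interval_cases a <;>
      simp only [Int.cast_zero, Int.cast_one, Int.cast_ofNat] at key hs2 <;>
      nlinarith [hs0, hs2, key, hd']
  · have ha4 : (4:ℝ) ≤ (a:ℝ) := by exact_mod_cast h4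
    nlinarith [mul_nonneg (by linarith : (0:ℝ) ≤ (a:ℝ) - 1) hs0]
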